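/- Under the three-tier association model, define the horizontal serving distance X_v = √(Z_v² − h_v²). Then conditional on the event that the user associates with the UAV tier, X_v has probability density f_{X_v}(x) = (2π·λ_v/A_v)·x·exp(−π·x²·(λ_v + λ_m·P_mv + λ_s·P_sv) − π·λ_m·(h_v²·P_mv − h_m²) − π·λ_s·(h_v²·P_sv − h_s²)) for x ≥ 0; equivalently, for every x ≥ 0, P[X_v ≤ x and UAV association] = ∫₀^x 2π·λ_v·t·exp(−π·t²·(λ_v + λ_m·P_mv + λ_s·P_sv) − π·λ_m·(h_v²·P_mv − h_m²) − π·λ_s·(h_v²·P_sv − h_s²)) dt. -/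

import Mathlib

open MeasureTheory ProbabilityTheory Real
open scoped ENNReal

lemma ftc_gauss (K c d u v : ℝ) (hc : c ≠ 0) :
    ∫ z in u..v, K * z * Real.exp (c * z^2 + d)
      = K * (Real.exp (c*v^2+d) - Real.exp (c*u^2+d)) / (2*c) := by
  have hcont : Continuous fun z : ℝ => K * z * Real.exp (c * z^2 + d) := by
    continuity
  have hderiv : ∀ z ∈ Set.uIcc u v,
      HasDerivAt (fun z => K * Real.exp (c*z^2+d) / (2*c)) (K * z * Real.exp (c * z^2 + d)) z := by
    intro z _
    have h1 : HasDerivAt (fun z : ℝ => c*z^2+d) (2*c*z) z := by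
      simpa [mul_comm, mul_assoc, mul_left_comm] using
        (((hasDerivAt_pow 2 z).const_mul c).add_const d)
    have h2 := ((h1.exp).const_mul K).div_const (2*c)
    refine h2.congr_deriv ?_
    rw [div_eq_iff (mul_ne_zero two_ne_zero hc)]
    ring
  rw [intervalIntegral.integral_eq_sub_of_hasDerivAt hderiv (hcont.intervalIntegrable u v)]
  ring

lemma ccdf_ae {Ω : Type*} [MeasureSpace Ω] [IsProbabilityMeasure (ℙ : Measure Ω)]
    (Z : Ω → ℝ) (hZ : Measurable Z) (l h : ℝ)
    (hCCDF : ∀ x : ℝ, ℙ {ω | Z ω > x} =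
      if x < h then 1 else ENNReal.ofReal (Real.exp (-(π * l * (x ^ 2 - h ^ 2))))) :
    ∀ᵐ ω, h < Z ω := by
  have h1 : ℙ {ω | Z ω > h} = 1 := by
    rw [hCCDF h]; simp
  have hms : MeasurableSet {ω | Z ω > h} := hZ measurableSet_Ioi
  rw [ae_iff]
  have := prob_compl_eq_zero_iff hms |>.2 h1
  simpa [Set.compl_setOf] using this

lemma law_eq {Ω : Type*} [MeasureSpace Ω] [IsProbabilityMeasure (ℙ : Measure Ω)]
    (Z : Ω → ℝ) (hZ : Measurable Z) (l h : ℝ) (hl : 0 < l) (hh : 0 < h)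
    (hCCDF : ∀ x : ℝ, ℙ {ω | Z ω > x} =
      if x < h then 1 else ENNReal.ofReal (Real.exp (-(π * l * (x ^ 2 - h ^ 2))))) :
    Measure.map Z ℙ = (volume : Measure ℝ).withDensity
      (Set.indicator (Set.Ioi h) (fun z => ENNReal.ofReal (2*π*l*z * Real.exp (-(π * l * (z ^ 2 - h ^ 2)))))) := by
  haveI : IsProbabilityMeasure (Measure.map Z ℙ) := Measure.isProbabilityMeasure_map hZ.aemeasurable
  refine Measure.ext_of_Iic _ _ (fun a => ?_)
  have hmap : (Measure.map Z ℙ) (Set.Iic a) = ℙ {ω | Z ω ≤ a} := by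
    rw [Measure.map_apply hZ measurableSet_Iic]; rfl
  have hcompl : ℙ {ω | Z ω ≤ a} = 1 - ℙ {ω | Z ω > a} := by
    have he : {ω | Z ω ≤ a} = {ω | Z ω > a}ᶜ := by ext ω; simp [not_lt]
    have hms : MeasurableSet {ω | Z ω > a} := hZ measurableSet_Ioi
    rw [he, measure_compl hms (measure_ne_top _ _), measure_univ]
  have hrhs : (volume : Measure ℝ).withDensity
      (Set.indicator (Set.Ioi h) (fun z => ENNReal.ofReal (2*π*l*z * Real.exp (-(π * l * (z ^ 2 - h ^ 2)))))) (Set.Iic a)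
      = ∫⁻ z in Set.Ioc h a, ENNReal.ofReal (2*π*l*z * Real.exp (-(π * l * (z ^ 2 - h ^ 2)))) := by
    rw [withDensity_apply _ measurableSet_Iic, lintegral_indicator measurableSet_Ioi _,
      Measure.restrict_restrict measurableSet_Ioi, Set.Ioi_inter_Iic]
  rw [hmap, hcompl, hCCDF a, hrhs]
  rcases le_or_gt a h with hah | hah
  · have hemp : Set.Ioc h a = ∅ := Set.Ioc_eq_empty (not_lt.2 hah)
    rw [hemp]
    simp only [Measure.restrict_empty, lintegral_zero_measure]
    rcases lt_or_eq_of_le hah with h' | h'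
    · rw [if_pos h']; simp
    · rw [if_neg (by simp [h'])]
      subst h'
      simp
  · rw [if_neg (not_lt.2 hah.le)]
    have hint : ∫⁻ z in Set.Ioc h a, ENNReal.ofReal (2*π*l*z * Real.exp (-(π * l * (z ^ 2 - h ^ 2))))
        = ENNReal.ofReal (∫ z in Set.Ioc h a, 2*π*l*z * Real.exp (-(π * l * (z ^ 2 - h ^ 2)))) := by
      refine (ofReal_integral_eq_lintegral_ofReal ?_ ?_).symm
      · exact (Continuous.integrableOn_Ioc (by continuity))
      · refine (ae_restrict_iff' measurableSet_Ioc).2 (Filter.Eventually.of_forall fun z hz => ?_)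
        have hz0 : 0 < z := lt_trans hh hz.1
        positivity
    rw [hint, ← intervalIntegral.integral_of_le hah.le]
    have hftc := ftc_gauss (2*π*l) (-(π*l)) (π*l*h^2) h a (neg_ne_zero.2 (by positivity))
    have heq : ∀ z : ℝ, 2*π*l*z * Real.exp (-(π * l * (z ^ 2 - h ^ 2)))
        = 2*π*l * z * Real.exp ((-(π*l)) * z^2 + π*l*h^2) := by
      intro z; congr 2; ring
    rw [intervalIntegral.integral_congr (fun z _ => heq z), hftc]
    have h1 : (-(π*l)) * h^2 + π*l*h^2 = 0 := by ring
    have h2 : (-(π*l)) * a^2 + π*l*h^2 = -(π * l * (a ^ 2 - h ^ 2)) := by ring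
    rw [h1, h2, Real.exp_zero]
    have hle : Real.exp (-(π * l * (a ^ 2 - h ^ 2))) ≤ 1 := by
      apply Real.exp_le_one_iff.2
      have h3 : (0:ℝ) ≤ a^2 - h^2 := by nlinarith
      have := mul_nonneg (mul_nonneg Real.pi_pos.le hl.le) h3
      linarith
    rw [← ENNReal.ofReal_one, ← ENNReal.ofReal_sub _ (Real.exp_pos _).le]
    congr 1
    field_simp
    ring

lemma assoc_iff (P Q zq zp eta : ℝ) (hP : 0 < P) (hQ : 0 < Q) (hzq : 0 < zq)
    (hzp : 0 < zp) (heta : 0 < eta) :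
    Q * zq ^ (-eta) > P * zp ^ (-eta) ↔ (P/Q) ^ (1/eta) * zq < zp := by
  have hetane : eta ≠ 0 := heta.ne'
  set cq := Q ^ (-(1/eta)) with hcq
  set cp := P ^ (-(1/eta)) with hcp
  have hcq0 : 0 < cq := Real.rpow_pos_of_pos hQ _
  have hcp0 : 0 < cp := Real.rpow_pos_of_pos hP _
  have hQe : Q * zq ^ (-eta) = (cq * zq) ^ (-eta) := by
    rw [Real.mul_rpow hcq0.le hzq.le, hcq, ← Real.rpow_mul hQ.le]
    have h1 : -(1/eta) * -eta = 1 := by field_simp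
    rw [h1, Real.rpow_one]
  have hPe : P * zp ^ (-eta) = (cp * zp) ^ (-eta) := by
    rw [Real.mul_rpow hcp0.le hzp.le, hcp, ← Real.rpow_mul hP.le]
    have h1 : -(1/eta) * -eta = 1 := by field_simp
    rw [h1, Real.rpow_one]
  have hkey : cp * (P/Q) ^ ((1:ℝ)/eta) = cq := by
    rw [Real.div_rpow hP.le hQ.le, hcp, hcq]
    rw [Real.rpow_neg hP.le, Real.rpow_neg hQ.le]
    field_simp
  rw [hQe, hPe, gt_iff_lt,
    Real.rpow_lt_rpow_iff_of_neg (mul_pos hcp0 hzp) (mul_pos hcq0 hzq) (neg_neg_of_pos heta),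
    ← hkey, mul_assoc, mul_lt_mul_iff_right₀ hcp0]

set_option maxHeartbeats 1000000 in
theorem stmt6
    {Ω : Type*} [MeasureSpace Ω] [IsProbabilityMeasure (ℙ : Measure Ω)]
    (Zm Zs Zv : Ω → ℝ)
    (hZmMeas : Measurable Zm) (hZsMeas : Measurable Zs) (hZvMeas : Measurable Zv)
    (hIndep : iIndepFun ![Zm, Zs, Zv] ℙ)
    (lm ls lv hm hs hv Pm Ps Pv eta : ℝ)
    (hlm : 0 < lm) (hls : 0 < ls) (hlv : 0 < lv)
    (hhm : 0 < hm) (hhs : 0 < hs) (hhv : 0 < hv)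
    (hPm : 0 < Pm) (hPs : 0 < Ps) (hPv : 0 < Pv)
    (heta : 2 < eta)
    (Psm Pms Pmv Pvm Psv Pvs : ℝ)
    (hPsm : Psm = (Ps / Pm) ^ (2 / eta)) (hPms : Pms = (Pm / Ps) ^ (2 / eta))
    (hPmv : Pmv = (Pm / Pv) ^ (2 / eta)) (hPvm : Pvm = (Pv / Pm) ^ (2 / eta))
    (hPsv : Psv = (Ps / Pv) ^ (2 / eta)) (hPvs : Pvs = (Pv / Ps) ^ (2 / eta))
    (hZmCCDF : ∀ x : ℝ, ℙ {ω | Zm ω > x} =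
      if x < hm then 1 else ENNReal.ofReal (Real.exp (-(π * lm * (x ^ 2 - hm ^ 2)))))
    (hZsCCDF : ∀ x : ℝ, ℙ {ω | Zs ω > x} =
      if x < hs then 1 else ENNReal.ofReal (Real.exp (-(π * ls * (x ^ 2 - hs ^ 2)))))
    (hZvCCDF : ∀ x : ℝ, ℙ {ω | Zv ω > x} =
      if x < hv then 1 else ENNReal.ofReal (Real.exp (-(π * lv * (x ^ 2 - hv ^ 2)))))
    (hsm : hs < hm) (hmv : hm < hv)
    (hsm2 : hs ^ 2 ≤ Psm * hm ^ 2) (hmv2 : hm ^ 2 ≤ Pmv * hv ^ 2)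
    (x : ℝ) (hx : 0 ≤ x) :
    (ℙ ({ω | Real.sqrt (Zv ω ^ 2 - hv ^ 2) ≤ x} ∩ {ω | Pv * Zv ω ^ (-eta) > Pm * Zm ω ^ (-eta) ∧ Pv * Zv ω ^ (-eta) > Ps * Zs ω ^ (-eta)})).toReal =
      ∫ t in (0:ℝ)..x, 2 * π * lv * t *
        Real.exp (-(π * t ^ 2 * (lv + lm * Pmv + ls * Psv)) -
          π * lm * (hv ^ 2 * Pmv - hm ^ 2) - π * ls * (hv ^ 2 * Psv - hs ^ 2)) := by
  have heta0 : (0:ℝ) < eta := by linarith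
  have hPmv0 : 0 < Pmv := by rw [hPmv]; positivity
  have hPsv0 : 0 < Psv := by rw [hPsv]; positivity
  set a := (Pm/Pv) ^ ((1:ℝ)/eta) with ha
  set b := (Ps/Pv) ^ ((1:ℝ)/eta) with hb
  have ha0 : 0 < a := Real.rpow_pos_of_pos (by positivity) _
  have hb0 : 0 < b := Real.rpow_pos_of_pos (by positivity) _
  have ha2 : a^2 = Pmv := by
    rw [ha, hPmv, ← Real.rpow_natCast ((Pm/Pv) ^ ((1:ℝ)/eta)) 2, ← Real.rpow_mul (by positivity)]
    norm_num
    congr 1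
    ring
  have hb2 : b^2 = Psv := by
    rw [hb, hPsv, ← Real.rpow_natCast ((Ps/Pv) ^ ((1:ℝ)/eta)) 2, ← Real.rpow_mul (by positivity)]
    norm_num
    congr 1
    ring
  -- Psv * hv^2 ≥ hs^2
  have hPsmPmv : Psm * Pmv = Psv := by
    rw [hPsm, hPmv, hPsv, ← Real.mul_rpow (by positivity) (by positivity)]
    congr 1
    field_simp
  have hsv2 : hs ^ 2 ≤ Psv * hv ^ 2 := by
    have hPsm0 : 0 < Psm := by rw [hPsm]; positivity
    calc hs ^ 2 ≤ Psm * hm ^ 2 := hsm2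
      _ ≤ Psm * (Pmv * hv ^ 2) := by nlinarith
      _ = Psv * hv ^ 2 := by rw [← hPsmPmv]; ring
  have hahv : hm ≤ a * hv := by
    have h1 : hm ^ 2 ≤ (a * hv) ^ 2 := by rw [mul_pow, ha2]; linarith [hmv2]
    nlinarith [mul_pos ha0 hhv]
  have hbhv : hs ≤ b * hv := by
    have h1 : hs ^ 2 ≤ (b * hv) ^ 2 := by rw [mul_pow, hb2]; linarith [hsv2]
    nlinarith [mul_pos hb0 hhv]
  set R := Real.sqrt (x^2 + hv^2) with hR
  have hR2 : R^2 = x^2 + hv^2 := Real.sq_sqrt (by positivity)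
  have hhvR : hv ≤ R := by
    rw [hR]
    exact (Real.le_sqrt hhv.le (by positivity)).2 (by nlinarith)
  -- a.e. facts
  have haem := ccdf_ae Zm hZmMeas lm hm hZmCCDF
  have haes := ccdf_ae Zs hZsMeas ls hs hZsCCDF
  have haev := ccdf_ae Zv hZvMeas lv hv hZvCCDF
  -- event rewriting
  set A : Set Ω := {ω | Zv ω ≤ R ∧ a * Zv ω < Zm ω ∧ b * Zv ω < Zs ω} with hA
  have hcongr : ℙ ({ω | Real.sqrt (Zv ω ^ 2 - hv ^ 2) ≤ x} ∩
      {ω | Pv * Zv ω ^ (-eta) > Pm * Zm ω ^ (-eta) ∧ Pv * Zv ω ^ (-eta) > Ps * Zs ω ^ (-eta)}) = ℙ A := by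
    apply measure_congr
    rw [Filter.eventuallyEq_set]
    filter_upwards [haem, haes, haev] with ω h1 h2 h3
    have hzv0 : 0 < Zv ω := lt_trans hhv h3
    have hzm0 : 0 < Zm ω := lt_trans hhm h1
    have hzs0 : 0 < Zs ω := lt_trans hhs h2
    have e1 : Real.sqrt (Zv ω ^ 2 - hv ^ 2) ≤ x ↔ Zv ω ≤ R := by
      rw [Real.sqrt_le_iff, hR, Real.le_sqrt hzv0.le (by positivity)]
      constructor
      · rintro ⟨_, h⟩; linarith
      · intro h; exact ⟨hx, by linarith⟩
    have e2 : Pv * Zv ω ^ (-eta) > Pm * Zm ω ^ (-eta) ↔ a * Zv ω < Zm ω :=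
      assoc_iff Pm Pv (Zv ω) (Zm ω) eta hPm hPv hzv0 hzm0 heta0
    have e3 : Pv * Zv ω ^ (-eta) > Ps * Zs ω ^ (-eta) ↔ b * Zv ω < Zs ω :=
      assoc_iff Ps Pv (Zv ω) (Zs ω) eta hPs hPv hzv0 hzs0 heta0
    simp only [Set.mem_inter_iff, Set.mem_setOf_eq, hA, e1, e2, e3]
  rw [hcongr]
  -- independence
  haveI hpm : IsProbabilityMeasure (Measure.map Zm ℙ) := Measure.isProbabilityMeasure_map hZmMeas.aemeasurable
  haveI hps : IsProbabilityMeasure (Measure.map Zs ℙ) := Measure.isProbabilityMeasure_map hZsMeas.aemeasurable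
  haveI hpv : IsProbabilityMeasure (Measure.map Zv ℙ) := Measure.isProbabilityMeasure_map hZvMeas.aemeasurable
  have hmeasvec : ∀ i, Measurable (![Zm, Zs, Zv] i) := by
    intro i; fin_cases i <;> simpa
  have hindep1 : IndepFun (fun ω => (Zm ω, Zs ω)) Zv ℙ := by
    have := hIndep.indepFun_prodMk hmeasvec 0 1 2 (by decide) (by decide)
    simpa using this
  have hindep2 : IndepFun Zm Zs ℙ := by
    have := hIndep.indepFun (show (0:Fin 3) ≠ 1 by decide)
    simpa using this
  have hmapT : Measure.map (fun ω => (Zv ω, (Zm ω, Zs ω))) ℙ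
      = (Measure.map Zv ℙ).prod (Measure.map (fun ω => (Zm ω, Zs ω)) ℙ) :=
    (indepFun_iff_map_prod_eq_prod_map_map hZvMeas.aemeasurable
      ((hZmMeas.prodMk hZsMeas).aemeasurable)).1 hindep1.symm
  have hmapW : Measure.map (fun ω => (Zm ω, Zs ω)) ℙ = (Measure.map Zm ℙ).prod (Measure.map Zs ℙ) :=
    (indepFun_iff_map_prod_eq_prod_map_map hZmMeas.aemeasurable hZsMeas.aemeasurable).1 hindep2
  set S : Set (ℝ × ℝ × ℝ) := {p | p.1 ≤ R ∧ a * p.1 < p.2.1 ∧ b * p.1 < p.2.2} with hS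
  have hSm : MeasurableSet S := by
    refine MeasurableSet.inter ?_ (MeasurableSet.inter ?_ ?_)
    · exact measurableSet_le measurable_fst measurable_const
    · exact measurableSet_lt (measurable_fst.const_mul a) (measurable_fst.comp measurable_snd)
    · exact measurableSet_lt (measurable_fst.const_mul b) (measurable_snd.comp measurable_snd)
  have hTmeas : Measurable fun ω : Ω => (Zv ω, (Zm ω, Zs ω)) :=
    hZvMeas.prodMk (hZmMeas.prodMk hZsMeas)
  have hPA : ℙ A = ((Measure.map Zv ℙ).prod ((Measure.map Zm ℙ).prod (Measure.map Zs ℙ))) S := by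
    rw [← hmapW, ← hmapT, Measure.map_apply hTmeas hSm]
    rfl
  rw [Measure.prod_apply hSm] at hPA
  have hslice : ∀ z : ℝ, ((Measure.map Zm ℙ).prod (Measure.map Zs ℙ)) (Prod.mk z ⁻¹' S)
      = Set.indicator (Set.Iic R)
          (fun z => ℙ {ω | Zm ω > a*z} * ℙ {ω | Zs ω > b*z}) z := by
    intro z
    by_cases hz : z ≤ R
    · have hpre : Prod.mk z ⁻¹' S = Set.Ioi (a*z) ×ˢ Set.Ioi (b*z) := by
        ext q
        simp [hS, hz, Set.mem_Ioi]
      rw [hpre, Measure.prod_prod, Set.indicator_of_mem (Set.mem_Iic.mpr hz)]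
      congr 1 <;> rw [Measure.map_apply (by measurability) measurableSet_Ioi] <;> rfl
    · have hpre : Prod.mk z ⁻¹' S = ∅ := by
        ext q; simp [hS, hz]
      rw [hpre]
      simp [Set.indicator_apply, hz]
  have hlaw := law_eq Zv hZvMeas lv hv hlv hhv hZvCCDF
  set C : ℝ := lv + lm * Pmv + ls * Psv with hC
  have hC0 : 0 < C := by rw [hC]; positivity
  set c : ℝ := -(π * C) with hc
  have hc0 : c ≠ 0 := by rw [hc]; exact neg_ne_zero.2 (by positivity)
  set d : ℝ := π*(lv*hv^2 + lm*hm^2 + ls*hs^2) with hd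
  set d2 : ℝ := -(π*lm*(hv^2*Pmv-hm^2)) - π*ls*(hv^2*Psv-hs^2) with hd2
  have hslice' : ∀ z : ℝ, ((Measure.map Zm ℙ).prod (Measure.map Zs ℙ)) (Prod.mk z ⁻¹' S)
      = Set.indicator (Set.Iic R) (fun z =>
          (if a*z < hm then (1:ℝ≥0∞) else ENNReal.ofReal (Real.exp (-(π*lm*((a*z)^2 - hm^2))))) *
          (if b*z < hs then (1:ℝ≥0∞) else ENNReal.ofReal (Real.exp (-(π*ls*((b*z)^2 - hs^2)))))) z := by
    intro z
    rw [hslice z]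
    simp only [hZmCCDF, hZsCCDF]
  have hfmeas : Measurable (Set.indicator (Set.Ioi hv)
      (fun z => ENNReal.ofReal (2*π*lv*z * Real.exp (-(π * lv * (z ^ 2 - hv ^ 2)))))) := by
    have hcont1 : Continuous fun z : ℝ => 2*π*lv*z * Real.exp (-(π * lv * (z ^ 2 - hv ^ 2))) := by
      fun_prop
    exact (hcont1.measurable.ennreal_ofReal).indicator measurableSet_Ioi
  have hg1 : Measurable fun z : ℝ =>
      if a*z < hm then (1:ℝ≥0∞) else ENNReal.ofReal (Real.exp (-(π*lm*((a*z)^2 - hm^2)))) := by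
    refine Measurable.ite ?_ measurable_const ?_
    · exact measurableSet_lt (measurable_id.const_mul a) measurable_const
    · have hcont2 : Continuous fun z : ℝ => Real.exp (-(π*lm*((a*z)^2 - hm^2))) := by fun_prop
      exact hcont2.measurable.ennreal_ofReal
  have hg2 : Measurable fun z : ℝ =>
      if b*z < hs then (1:ℝ≥0∞) else ENNReal.ofReal (Real.exp (-(π*ls*((b*z)^2 - hs^2)))) := by
    refine Measurable.ite ?_ measurable_const ?_
    · exact measurableSet_lt (measurable_id.const_mul b) measurable_const
    · have hcont3 : Continuous fun z : ℝ => Real.exp (-(π*ls*((b*z)^2 - hs^2))) := by fun_prop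
      exact hcont3.measurable.ennreal_ofReal
  have hkmeas : Measurable (Set.indicator (Set.Iic R) (fun z =>
      (if a*z < hm then (1:ℝ≥0∞) else ENNReal.ofReal (Real.exp (-(π*lm*((a*z)^2 - hm^2))))) *
      (if b*z < hs then (1:ℝ≥0∞) else ENNReal.ofReal (Real.exp (-(π*ls*((b*z)^2 - hs^2))))))) :=
    Measurable.indicator (hg1.mul hg2) measurableSet_Iic
  set w : ℝ → ℝ := fun z => 2*π*lv*z * Real.exp (-(π * lv * (z ^ 2 - hv ^ 2))) *
      (Real.exp (-(π*lm*(Pmv*z^2 - hm^2))) * Real.exp (-(π*ls*(Psv*z^2 - hs^2)))) with hw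
  have hpt : ∀ z : ℝ,
      (Set.indicator (Set.Ioi hv)
          (fun z => ENNReal.ofReal (2*π*lv*z * Real.exp (-(π * lv * (z ^ 2 - hv ^ 2))))) *
        Set.indicator (Set.Iic R) (fun z =>
          (if a*z < hm then (1:ℝ≥0∞) else ENNReal.ofReal (Real.exp (-(π*lm*((a*z)^2 - hm^2))))) *
          (if b*z < hs then (1:ℝ≥0∞) else ENNReal.ofReal (Real.exp (-(π*ls*((b*z)^2 - hs^2))))))) z
      = Set.indicator (Set.Ioc hv R) (fun z => ENNReal.ofReal (w z)) z := by
    intro z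
    simp only [Pi.mul_apply]
    by_cases h1 : hv < z
    · by_cases h2 : z ≤ R
      · rw [Set.indicator_of_mem (Set.mem_Ioi.mpr h1),
          Set.indicator_of_mem (Set.mem_Iic.mpr h2),
          Set.indicator_of_mem (Set.mem_Ioc.mpr ⟨h1, h2⟩)]
        have hz0 : 0 < z := lt_trans hhv h1
        have hm' : ¬ (a*z < hm) := by
          push_neg
          calc hm ≤ a * hv := hahv
            _ ≤ a * z := mul_le_mul_of_nonneg_left h1.le ha0.le
        have hs' : ¬ (b*z < hs) := by
          push_neg
          calc hs ≤ b * hv := hbhv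
            _ ≤ b * z := mul_le_mul_of_nonneg_left h1.le hb0.le
        rw [if_neg hm', if_neg hs']
        have e1 : (a*z)^2 = Pmv*z^2 := by rw [mul_pow, ha2]
        have e2 : (b*z)^2 = Psv*z^2 := by rw [mul_pow, hb2]
        rw [e1, e2, ← ENNReal.ofReal_mul (Real.exp_pos _).le,
          ← ENNReal.ofReal_mul (by positivity :
            (0:ℝ) ≤ 2*π*lv*z * Real.exp (-(π * lv * (z ^ 2 - hv ^ 2))))]
      · rw [Set.indicator_of_notMem (fun hmem => h2 (Set.mem_Iic.mp hmem)),
          Set.indicator_of_notMem (fun hmem => h2 (Set.mem_Ioc.mp hmem).2)]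
        rw [mul_zero]
    · rw [Set.indicator_of_notMem (fun hmem => h1 (Set.mem_Ioi.mp hmem)),
          Set.indicator_of_notMem (fun hmem => h1 (Set.mem_Ioc.mp hmem).1)]
      rw [zero_mul]
  have hwcont : Continuous w := by rw [hw]; fun_prop
  have hwint : IntegrableOn w (Set.Ioc hv R) volume :=
    Continuous.integrableOn_Ioc hwcont
  have hwnn : 0 ≤ᵐ[volume.restrict (Set.Ioc hv R)] w := by
    refine (ae_restrict_iff' measurableSet_Ioc).2 (Filter.Eventually.of_forall fun z hz => ?_)
    have hz0 : 0 < z := lt_trans hhv hz.1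
    rw [hw]
    positivity
  have hmain : ℙ A = ENNReal.ofReal (∫ z in Set.Ioc hv R, w z) := by
    rw [hPA, lintegral_congr hslice', hlaw,
      lintegral_withDensity_eq_lintegral_mul _ hfmeas hkmeas,
      lintegral_congr hpt, lintegral_indicator measurableSet_Ioc _,
      ← ofReal_integral_eq_lintegral_ofReal hwint hwnn]
  rw [hmain, ENNReal.toReal_ofReal (setIntegral_nonneg measurableSet_Ioc
    (fun z hz => by have hz0 : 0 < z := lt_trans hhv hz.1; rw [hw]; positivity))]
  rw [← intervalIntegral.integral_of_le hhvR]
  have hwc' : ∀ z ∈ Set.uIcc hv R, w z = (2*π*lv) * z * Real.exp (c * z^2 + d) := by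
    intro z _
    show 2*π*lv*z * Real.exp (-(π * lv * (z ^ 2 - hv ^ 2))) *
        (Real.exp (-(π*lm*(Pmv*z^2 - hm^2))) * Real.exp (-(π*ls*(Psv*z^2 - hs^2))))
      = (2*π*lv) * z * Real.exp (c * z^2 + d)
    rw [mul_assoc (2*π*lv*z), ← Real.exp_add, ← Real.exp_add]
    rw [show -(π * lv * (z ^ 2 - hv ^ 2)) + (-(π*lm*(Pmv*z^2 - hm^2)) + -(π*ls*(Psv*z^2 - hs^2)))
        = c * z^2 + d from by rw [hc, hd, hC]; ring]
  rw [intervalIntegral.integral_congr hwc', ftc_gauss (2*π*lv) c d hv R hc0]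
  have hrhseq : ∀ t ∈ Set.uIcc (0:ℝ) x,
      2 * π * lv * t * Real.exp (-(π * t ^ 2 * C) -
        π * lm * (hv ^ 2 * Pmv - hm ^ 2) - π * ls * (hv ^ 2 * Psv - hs ^ 2))
      = (2*π*lv) * t * Real.exp (c * t^2 + d2) := by
    intro t _
    rw [show -(π * t ^ 2 * C) - π * lm * (hv ^ 2 * Pmv - hm ^ 2) - π * ls * (hv ^ 2 * Psv - hs ^ 2)
        = c * t^2 + d2 from by rw [hc, hd2]; ring]
  rw [intervalIntegral.integral_congr hrhseq, ftc_gauss (2*π*lv) c d2 0 x hc0]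
  have eA : c*R^2+d = c*x^2+d2 := by
    rw [hR2, hc, hd, hd2, hC]; ring
  have eB : c*hv^2+d = c*0^2+d2 := by
    rw [hc, hd, hd2, hC]; ring
  rw [eA, eB]
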